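/- Every entry of a keypoint time series other than the first and last is a strict local extremum of the original series: if t is a sequence of reals with no two consecutive equal entries, and k = LEP(t) is the subsequence of keypoints, then consecutive entries of k strictly alternate between local minima and local maxima of t (the keypoint series is alternating: k_{i-1} < k_i > k_{i+1} or k_{i-1} > k_i < k_{i+1} for every interior i). -/

import Mathlib

/-- `t i` is a keypoint of the (1-indexed) time series `t` of length `N`. -/
def isKeypoint (t : ℕ → ℝ) (N i : ℕ) : Prop :=
  i = 1 ∨ i = N ∨ (t (i-1) > t i ∧ t i < t (i+1)) ∨ (t (i-1) < t i ∧ t i > t (i+1))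

open Classical in
/-- The increasing list of keypoint indices of `t` (indices in `{1,...,N}`). -/
noncomputable def LEPidx (t : ℕ → ℝ) (N : ℕ) : List ℕ :=
  Finset.sort ((Finset.Icc 1 N).filter fun i => isKeypoint t N i) (· ≤ ·)

/-- LEP on lists: the subsequence of keypoint values. -/
noncomputable def LEPlist (l : List ℝ) : List ℝ :=
  (LEPidx (fun i => l.getD (i-1) 0) l.length).map fun i => l.getD (i-1) 0

lemma chain_lt (t : ℕ → ℝ) (a b : ℕ) (hab : a < b)
    (h : ∀ i, a ≤ i → i < b → t i < t (i+1)) : t a < t b := by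
  induction b with
  | zero => omega
  | succ b ih =>
    rcases Nat.lt_succ_iff_lt_or_eq.mp hab with h1 | h1
    · exact lt_trans (ih h1 (fun i hi hib => h i hi (by omega))) (h b (by omega) (by omega))
    · subst h1; exact h a le_rfl (by omega)

lemma chain_gt (t : ℕ → ℝ) (a b : ℕ) (hab : a < b)
    (h : ∀ i, a ≤ i → i < b → t (i+1) < t i) : t b < t a := by
  have := chain_lt (fun i => -(t i)) a b hab (fun i hi hib => neg_lt_neg (h i hi hib))
  simpa using this

lemma mono_seg (t : ℕ → ℝ) (N a b : ℕ)
    (hd : ∀ i, 1 ≤ i → i < N → t i ≠ t (i+1))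
    (ha : 1 ≤ a) (hb : b ≤ N) (hab : a < b)
    (hno : ∀ i, a < i → i < b → ¬ isKeypoint t N i) :
    (∀ i, a ≤ i → i < b → t i < t (i+1)) ∨ (∀ i, a ≤ i → i < b → t (i+1) < t i) := by
  rcases lt_or_gt_of_ne (hd a ha (by omega)) with h0 | h0
  · left
    intro i
    induction i with
    | zero => intro hi _; omega
    | succ i ih =>
      intro hi hib
      rcases Nat.lt_or_ge a (i+1) with h1 | h1
      · have hprev : t i < t (i+1) := ih (by omega) (by omega)
        by_contra hcon
        push_neg at hcon
        have hne := hd (i+1) (by omega) (by omega)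
        have hdec : t (i+1+1) < t (i+1) := lt_of_le_of_ne hcon hne.symm
        exact hno (i+1) h1 hib (Or.inr (Or.inr (Or.inr ⟨by simpa using hprev, hdec⟩)))
      · have ha' : i + 1 = a := by omega
        rw [ha']; exact h0
  · right
    intro i
    induction i with
    | zero => intro hi _; omega
    | succ i ih =>
      intro hi hib
      rcases Nat.lt_or_ge a (i+1) with h1 | h1
      · have hprev : t (i+1) < t i := ih (by omega) (by omega)
        by_contra hcon
        push_neg at hcon
        have hne := hd (i+1) (by omega) (by omega)
        have hinc : t (i+1) < t (i+1+1) := lt_of_le_of_ne hcon hne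
        exact hno (i+1) h1 hib (Or.inr (Or.inr (Or.inl ⟨by simpa using hprev, hinc⟩)))
      · have ha' : i + 1 = a := by omega
        rw [ha']; exact h0

theorem stmt16 (t : ℕ → ℝ) (N : ℕ) (hN : 2 ≤ N)
    (hd : ∀ i, 1 ≤ i → i < N → t i ≠ t (i+1)) :
    ∀ j : ℕ, 1 ≤ j → ∀ h2 : j + 1 < (LEPidx t N).length,
      (t ((LEPidx t N)[j-1]'(by omega)) < t ((LEPidx t N)[j]'(by omega)) ∧
        t ((LEPidx t N)[j+1]'h2) < t ((LEPidx t N)[j]'(by omega))) ∨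
      (t ((LEPidx t N)[j]'(by omega)) < t ((LEPidx t N)[j-1]'(by omega)) ∧
        t ((LEPidx t N)[j]'(by omega)) < t ((LEPidx t N)[j+1]'h2)) := by
  intro j hj h2
  have hsort : (LEPidx t N).Pairwise (· < ·) := (Finset.sortedLT_sort _).pairwise
  have hmem : ∀ i, i ∈ LEPidx t N ↔ (1 ≤ i ∧ i ≤ N ∧ isKeypoint t N i) := by
    intro i
    simp [LEPidx, Finset.mem_sort, Finset.mem_filter, Finset.mem_Icc, and_assoc]
  have hlt : ∀ (m n : ℕ) (hm : m < (LEPidx t N).length) (hn : n < (LEPidx t N).length),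
      m < n → (LEPidx t N)[m] < (LEPidx t N)[n] := by
    intro m n hm hn hmn
    exact List.pairwise_iff_get.mp hsort ⟨m, hm⟩ ⟨n, hn⟩ hmn
  have hj1 : j - 1 < (LEPidx t N).length := by omega
  have hj0 : j < (LEPidx t N).length := by omega
  set a := (LEPidx t N)[j-1]'hj1 with hadef
  set b := (LEPidx t N)[j]'hj0 with hbdef
  set c := (LEPidx t N)[j+1]'h2 with hcdef
  have hab : a < b := hlt _ _ hj1 hj0 (by omega)
  have hbc : b < c := hlt _ _ hj0 h2 (by omega)
  have hma := (hmem a).mp (List.getElem_mem hj1)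
  have hmb := (hmem b).mp (List.getElem_mem hj0)
  have hmc := (hmem c).mp (List.getElem_mem h2)
  -- b is an interior extremum
  have hbext : (t (b-1) > t b ∧ t b < t (b+1)) ∨ (t (b-1) < t b ∧ t b > t (b+1)) := by
    rcases hmb.2.2 with h | h | h | h
    · omega
    · omega
    · exact Or.inl h
    · exact Or.inr h
  have hno : ∀ (x y : ℕ) (hx : x < (LEPidx t N).length) (hy : y < (LEPidx t N).length),
      ∀ i, (LEPidx t N)[x]'hx < i → i < (LEPidx t N)[y]'hy → y = x + 1 → ¬ isKeypoint t N i := by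
    intro x y hx hy i h1 h2' hxy hk
    have hiN : i ≤ N := le_trans (le_of_lt h2') ((hmem _).mp (List.getElem_mem hy)).2.1
    have hi1 : 1 ≤ i := le_trans ((hmem _).mp (List.getElem_mem hx)).1 (le_of_lt h1)
    have hiL : i ∈ LEPidx t N := (hmem i).mpr ⟨hi1, hiN, hk⟩
    obtain ⟨m, hm, hmi⟩ := List.getElem_of_mem hiL
    have hxm : x < m := by
      by_contra hcon
      push_neg at hcon
      rcases Nat.lt_or_ge m x with h' | h'
      · have := hlt m x hm hx h'; omega
      · have hmx : m = x := by omega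
        subst hmx; omega
    have hmy : m < y := by
      by_contra hcon
      push_neg at hcon
      rcases Nat.lt_or_ge y m with h' | h'
      · have := hlt y m hy hm h'; omega
      · have : m = y := by omega
        subst this; omega
    omega
  have hno_ab : ∀ i, a < i → i < b → ¬ isKeypoint t N i :=
    fun i h1 h2' => hno (j-1) j hj1 hj0 i h1 h2' (by omega)
  have hno_bc : ∀ i, b < i → i < c → ¬ isKeypoint t N i :=
    fun i h1 h2' => hno j (j+1) hj0 h2 i h1 h2' rfl
  have hmono_ab := mono_seg t N a b hd hma.1 hmb.2.1 hab hno_ab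
  have hmono_bc := mono_seg t N b c hd hmb.1 hmc.2.1 hbc hno_bc
  have hb2 : 2 ≤ b := by omega
  have hbm1 : b - 1 + 1 = b := by omega
  rcases hbext with ⟨h1, h2'⟩ | ⟨h1, h2'⟩
  · -- local min: decreasing on [a,b], increasing on [b,c]
    right
    constructor
    · rcases hmono_ab with hm' | hm'
      · exfalso
        have := hm' (b-1) (by omega) (by omega)
        rw [hbm1] at this; linarith
      · exact chain_gt t a b hab hm'
    · rcases hmono_bc with hm' | hm'
      · exact chain_lt t b c hbc hm'
      · exfalso
        have := hm' b le_rfl hbc; linarith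
  · -- local max
    left
    constructor
    · rcases hmono_ab with hm' | hm'
      · exact chain_lt t a b hab hm'
      · exfalso
        have := hm' (b-1) (by omega) (by omega)
        rw [hbm1] at this; linarith
    · rcases hmono_bc with hm' | hm'
      · exfalso
        have := hm' b le_rfl hbc; linarith
      · exact chain_gt t b c hbc hm'
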